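/- With the setup of the S²_q projection e = (1/2)[[1 + q^{-1/2} r⁻¹ x₀, (1+q)^{1/2} r⁻¹ x₁], [(1+q)^{1/2} r⁻¹ x₁*, 1 - q^{1/2} r⁻¹ x₀]] on a *-algebra A generated by x₀, x₁, x₁*, the condition e² = e implies all three defining relations of S²_q: x₀x₁ = q x₁x₀, [x₁, x₁*] = (1-q⁻¹)x₀², and q x₀² + (1+q)x₁*x₁ = r²·1. -/

import Mathlib

private lemma smul_cancel_aux {M : Type*} [AddCommMonoid M] [Module ℂ M] {c d : ℂ}
    (hc : c ≠ 0) {x y : M} (h : c • x = d • y) : x = (c⁻¹ * d) • y := by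
  rw [mul_smul, ← h, inv_smul_smul₀ hc]

/-- Conversely, idempotency of the monopole matrix e implies all
three defining relations of S²_q. -/
theorem stmt2 (A : Type*) [Ring A] [StarRing A] [Algebra ℂ A] [StarModule ℂ A]
    (q r : ℝ) (hq : 0 < q) (hq1 : q ≠ 1) (hr : 0 < r) (x0 x1 : A)
    (hx0 : star x0 = x0)
    (e : Matrix (Fin 2) (Fin 2) A)
    (he : e =
      (1 / 2 : ℂ) •
        !![1 + (((Real.sqrt q)⁻¹ * r⁻¹ : ℝ) : ℂ) • x0,
             ((Real.sqrt (1 + q) * r⁻¹ : ℝ) : ℂ) • x1;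
           ((Real.sqrt (1 + q) * r⁻¹ : ℝ) : ℂ) • star x1,
             1 - ((Real.sqrt q * r⁻¹ : ℝ) : ℂ) • x0])
    (hidem : e * e = e) :
    x0 * x1 = (q : ℂ) • (x1 * x0) ∧
    x1 * star x1 - star x1 * x1 = ((1 - q⁻¹ : ℝ) : ℂ) • (x0 ^ 2) ∧
    (q : ℂ) • (x0 ^ 2) + ((1 + q : ℝ) : ℂ) • (star x1 * x1)
      = algebraMap ℂ A ((r : ℂ) ^ 2) := by
  rw [he] at hidem
  -- real scalar facts
  have hsq := Real.mul_self_sqrt hq.le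
  have h1q := Real.mul_self_sqrt (show (0:ℝ) ≤ 1+q by positivity)
  have hsq0 : Real.sqrt q ≠ 0 := by positivity
  have hr0 : r ≠ 0 := hr.ne'
  have s1R : r^2 * ((Real.sqrt q * r⁻¹) * (Real.sqrt q * r⁻¹)) = q := by
    field_simp; linear_combination hsq
  have s2R : r^2 * ((Real.sqrt (1+q) * r⁻¹) * (Real.sqrt (1+q) * r⁻¹)) = 1+q := by
    field_simp [h1q]; linear_combination h1q
  have s3R : q * r^2 * (((Real.sqrt q)⁻¹ * r⁻¹) * ((Real.sqrt q)⁻¹ * r⁻¹)) = 1 := by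
    field_simp
    linear_combination (-1) * hsq
  have s4R : q * r^2 * ((Real.sqrt (1+q) * r⁻¹) * (Real.sqrt (1+q) * r⁻¹)) = q*(1+q) := by
    field_simp [h1q]; linear_combination h1q
  have s5R : (Real.sqrt q * r⁻¹) * (Real.sqrt (1+q) * r⁻¹)
      = q * (((Real.sqrt q)⁻¹ * r⁻¹) * (Real.sqrt (1+q) * r⁻¹)) := by
    field_simp
    linear_combination hsq
  -- complex versions
  set a : ℂ := (((Real.sqrt q)⁻¹ * r⁻¹ : ℝ) : ℂ) with ha_def
  set b : ℂ := ((Real.sqrt (1 + q) * r⁻¹ : ℝ) : ℂ) with hb_def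
  set c : ℂ := ((Real.sqrt q * r⁻¹ : ℝ) : ℂ) with hc_def
  have s1 : (r:ℂ)^2 * (c * c) = (q:ℂ) := by rw [hc_def]; exact_mod_cast s1R
  have s2 : (r:ℂ)^2 * (b * b) = 1 + (q:ℂ) := by rw [hb_def]; exact_mod_cast s2R
  have s3 : (q:ℂ) * (r:ℂ)^2 * (a * a) = 1 := by rw [ha_def]; exact_mod_cast s3R
  have s4 : (q:ℂ) * (r:ℂ)^2 * (b * b) = (q:ℂ) * (1 + (q:ℂ)) := by
    rw [hb_def]; exact_mod_cast s4R
  have s5 : c * b = (q:ℂ) * (a * b) := by rw [ha_def, hb_def, hc_def]; exact_mod_cast s5R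
  have ha0 : a ≠ 0 := by
    rw [ha_def]
    exact_mod_cast (show ((Real.sqrt q)⁻¹ * r⁻¹ : ℝ) ≠ 0 by positivity)
  have hb0 : b ≠ 0 := by
    rw [hb_def]
    exact_mod_cast (show (Real.sqrt (1+q) * r⁻¹ : ℝ) ≠ 0 by positivity)
  have hq0 : (q:ℂ) ≠ 0 := by exact_mod_cast hq.ne'
  have h1q0 : 1 + (q:ℂ) ≠ 0 := by
    exact_mod_cast (show ((1+q:ℝ):ℂ) ≠ 0 by exact_mod_cast (show (1+q:ℝ) ≠ 0 by positivity))
  -- entry equations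
  have h00 := congrFun (congrFun hidem 0) 0
  have h01 := congrFun (congrFun hidem 0) 1
  have h11 := congrFun (congrFun hidem 1) 1
  simp only [Matrix.mul_apply, Fin.sum_univ_two, Matrix.smul_apply, Matrix.of_apply,
    Matrix.cons_val', Matrix.cons_val_zero, Matrix.cons_val_one, Matrix.head_cons,
    Matrix.head_fin_const, Matrix.empty_val', Matrix.cons_val_fin_one] at h00 h01 h11
  simp only [smul_mul_assoc, mul_smul_comm, smul_smul, add_mul, mul_add, mul_sub, sub_mul,
    mul_one, one_mul, smul_add, smul_sub] at h00 h01 h11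
  have E00 : (a*a) • (x0*x0) + (b*b) • (x1 * star x1) = 1 := by
    linear_combination (norm := module) (4:ℂ) • h00
  have E01 : (a*b) • (x0*x1) = (c*b) • (x1*x0) := by
    linear_combination (norm := module) (4:ℂ) • h01
  have E11 : (c*c) • (x0*x0) + (b*b) • (star x1 * x1) = 1 := by
    linear_combination (norm := module) (4:ℂ) • h11
  -- relation 1
  have hab0 : a * b ≠ 0 := mul_ne_zero ha0 hb0
  rw [s5] at E01
  have R1 : x0 * x1 = (q : ℂ) • (x1 * x0) := by
    have := smul_cancel_aux hab0 E01
    rw [this, show (a*b)⁻¹ * ((q:ℂ) * (a*b)) = (q:ℂ) by field_simp]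
  -- relation 3
  have F11 : (q:ℂ) • (x0*x0) + (1 + (q:ℂ)) • (star x1 * x1) = ((r:ℂ)^2) • (1:A) := by
    linear_combination (norm := module) ((r:ℂ)^2) • E11 - s1 • (x0*x0) - s2 • (star x1 * x1)
  have G00 : (x0*x0) + ((q:ℂ)*(1 + (q:ℂ))) • (x1 * star x1) = ((q:ℂ)*(r:ℂ)^2) • (1:A) := by
    linear_combination (norm := module) ((q:ℂ)*(r:ℂ)^2) • E00 - s3 • (x0*x0)
      - s4 • (x1 * star x1)
  -- relation 2
  have H2 : ((q:ℂ)*(1 + (q:ℂ))) • (x1 * star x1 - star x1 * x1)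
      = ((q:ℂ)^2 - 1) • (x0*x0) := by
    linear_combination (norm := module) G00 - (q:ℂ) • F11
  have hq1q0 : (q:ℂ)*(1 + (q:ℂ)) ≠ 0 := mul_ne_zero hq0 h1q0
  refine ⟨R1, ?_, ?_⟩
  · have := smul_cancel_aux hq1q0 H2
    rw [this, pow_two x0,
      show ((q:ℂ)*(1 + (q:ℂ)))⁻¹ * ((q:ℂ)^2 - 1) = ((1 - q⁻¹ : ℝ) : ℂ) from by
        push_cast; field_simp; ring]
  · rw [Algebra.algebraMap_eq_smul_one, pow_two]
    push_cast
    linear_combination (norm := module) F11
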